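/- arXiv:2312.00764 — 2 statements merged into one kernel-verified Lean document; each statement's English description precedes it below -/
import Mathlib

section
/- If f, g, h ∈ L¹(ℝ₊), then the polyconvolution P(f,g,h)(x) = (1/π) ∫_{ℝ₊³} Φ(x,u,v,w) f(u) g(v) h(w) du dv dw belongs to L¹(ℝ₊) and satisfies ‖P(f,g,h)‖_{L¹(ℝ₊)} ≤ ‖f‖_{L¹(ℝ₊)} ‖g‖_{L¹(ℝ₊)} ‖h‖_{L¹(ℝ₊)}. -/
open MeasureTheory Real Set

noncomputable def Phi (x u v w : ℝ) : ℝ :=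
  (v + w) / ((v + w) ^ 2 + (x + u) ^ 2) + (v + w) / ((v + w) ^ 2 + (x - u) ^ 2)

noncomputable def P (f g h : ℝ → ℝ) (x : ℝ) : ℝ :=
  (1 / π) * ∫ u in Ioi (0 : ℝ), ∫ v in Ioi (0 : ℝ), ∫ w in Ioi (0 : ℝ),
    Phi x u v w * f u * g v * h w

noncomputable def Fc (f : ℝ → ℝ) (y : ℝ) : ℝ :=
  Real.sqrt (2 / π) * ∫ x in Ioi (0 : ℝ), Real.cos (x * y) * f x

noncomputable def Lap (f : ℝ → ℝ) (y : ℝ) : ℝ :=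
  ∫ x in Ioi (0 : ℝ), Real.exp (-(x * y)) * f x

open Filter

lemma arctan_deriv' (s c : ℝ) (hs : s ≠ 0) (x : ℝ) :
    HasDerivAt (fun x => arctan ((x + c) / s)) (s / (s ^ 2 + (x + c) ^ 2)) x := by
  have h1 : HasDerivAt (fun x : ℝ => (x + c) / s) (1 / s) x := by
    simpa using ((hasDerivAt_id x).add_const c).div_const s
  have h2 := (Real.hasDerivAt_arctan ((x + c) / s)).comp x h1
  refine h2.congr_deriv ?_
  field_simp

lemma Phi_nonneg {u v w : ℝ} (h : 0 < v + w) (x : ℝ) : 0 ≤ Phi x u v w := by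
  have h1 : (0:ℝ) < (v+w) ^ 2 + (x + u) ^ 2 := by positivity
  have h2 : (0:ℝ) < (v+w) ^ 2 + (x - u) ^ 2 := by positivity
  have := h.le
  unfold Phi
  positivity

lemma key_int (u v w : ℝ) (hs : 0 < v + w) :
    IntegrableOn (fun x => Phi x u v w) (Ioi 0)
      ∧ ∫ x in Ioi (0:ℝ), Phi x u v w = π := by
  set s := v + w with hsdef
  set G : ℝ → ℝ := fun x => arctan ((x + u) / s) + arctan ((x + (-u)) / s) with hgdef
  have hderiv : ∀ x ∈ Ioi (0:ℝ), HasDerivAt G (Phi x u v w) x := by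
    intro x _
    have := (arctan_deriv' s u hs.ne' x).add (arctan_deriv' s (-u) hs.ne' x)
    simpa [Phi, hgdef, sub_eq_add_neg, Pi.add_def, hsdef] using this
  have hpos : ∀ x ∈ Ioi (0:ℝ), 0 ≤ Phi x u v w := fun x _ => Phi_nonneg hs x
  have hcont : ContinuousWithinAt G (Ici 0) 0 := by
    apply Continuous.continuousWithinAt
    exact ((Real.continuous_arctan.comp ((continuous_id.add continuous_const).div_const s)).add
      (Real.continuous_arctan.comp ((continuous_id.add continuous_const).div_const s)))
  have hlim : Tendsto G atTop (nhds π) := by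
    have hbase : Tendsto (fun x : ℝ => arctan x) atTop (nhds (π/2)) :=
      tendsto_arctan_atTop.mono_right nhdsWithin_le_nhds
    have h1 : ∀ c : ℝ, Tendsto (fun x : ℝ => arctan ((x + c) / s)) atTop (nhds (π/2)) := by
      intro c
      apply hbase.comp
      apply Tendsto.atTop_div_const hs
      exact tendsto_atTop_add_const_right _ _ tendsto_id
    have := (h1 u).add (h1 (-u))
    simpa [add_halves] using this
  have hint := integrableOn_Ioi_deriv_of_nonneg hcont hderiv hpos hlim
  have hval := integral_Ioi_of_hasDerivAt_of_nonneg hcont hderiv hpos hlim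
  refine ⟨hint, ?_⟩
  rw [hval]
  simp [hgdef, neg_div, Real.arctan_neg]

lemma key_lint (u v w : ℝ) (hs : 0 < v + w) :
    ∫⁻ x in Ioi (0:ℝ), (‖Phi x u v w‖₊ : ENNReal) = ENNReal.ofReal π := by
  obtain ⟨hint, hval⟩ := key_int u v w hs
  have : ∀ x : ℝ, (‖Phi x u v w‖₊ : ENNReal) = ENNReal.ofReal (Phi x u v w) := fun x =>
    Real.enorm_eq_ofReal (Phi_nonneg hs x)
  simp_rw [this]
  rw [← ofReal_integral_eq_lintegral_ofReal hint
    (Eventually.of_forall fun x => Phi_nonneg hs x), hval]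

lemma mPhi : Measurable (fun p : ℝ × ℝ × ℝ × ℝ => Phi p.1 p.2.1 p.2.2.1 p.2.2.2) := by
  unfold Phi
  apply Measurable.add <;>
  · apply Measurable.div
    · fun_prop
    · fun_prop


noncomputable def AA (f g h : ℝ → ℝ) (x u v w : ℝ) : ENNReal :=
  (‖Phi x u v w * f u * g v * h w‖₊ : ENNReal)

lemma mswap1 {A : ℝ → ℝ → ℝ → ℝ → ENNReal}
    (mA : Measurable fun p : ℝ × ℝ × ℝ × ℝ => A p.1 p.2.1 p.2.2.1 p.2.2.2)
    (μ : Measure ℝ) [SFinite μ] :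
    Measurable fun p : ℝ × ℝ => ∫⁻ v, ∫⁻ w, A p.1 p.2 v w ∂μ ∂μ := by
  have m1 : Measurable fun q : ((ℝ × ℝ) × ℝ) × ℝ => A q.1.1.1 q.1.1.2 q.1.2 q.2 :=
    mA.comp (by fun_prop : Measurable fun q : ((ℝ × ℝ) × ℝ) × ℝ =>
      (q.1.1.1, q.1.1.2, q.1.2, q.2))
  exact m1.lintegral_prod_right'.lintegral_prod_right'

lemma mswap2 {A : ℝ → ℝ → ℝ → ℝ → ENNReal}
    (mA : Measurable fun p : ℝ × ℝ × ℝ × ℝ => A p.1 p.2.1 p.2.2.1 p.2.2.2)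
    (μ : Measure ℝ) [SFinite μ] (u : ℝ) :
    Measurable fun p : ℝ × ℝ => ∫⁻ w, A p.1 u p.2 w ∂μ := by
  have m1 : Measurable fun q : (ℝ × ℝ) × ℝ => A q.1.1 u q.1.2 q.2 :=
    mA.comp (by fun_prop : Measurable fun q : (ℝ × ℝ) × ℝ => (q.1.1, u, q.1.2, q.2))
  exact m1.lintegral_prod_right'

lemma mswap3 {A : ℝ → ℝ → ℝ → ℝ → ENNReal}
    (mA : Measurable fun p : ℝ × ℝ × ℝ × ℝ => A p.1 p.2.1 p.2.2.1 p.2.2.2) (u v : ℝ) :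
    Measurable fun p : ℝ × ℝ => A p.1 u v p.2 :=
  mA.comp (by fun_prop : Measurable fun q : ℝ × ℝ => (q.1, u, v, q.2))

set_option maxHeartbeats 1000000 in
lemma main_meas (f g h : ℝ → ℝ) (mf : Measurable f) (mg : Measurable g) (mh : Measurable h)
    (hf : IntegrableOn f (Ioi 0)) (hg : IntegrableOn g (Ioi 0)) (hh : IntegrableOn h (Ioi 0)) :
    IntegrableOn (P f g h) (Ioi 0) ∧
      (∫ x in Ioi (0 : ℝ), |P f g h x|) ≤
        (∫ x in Ioi (0 : ℝ), |f x|) * (∫ x in Ioi (0 : ℝ), |g x|) *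
          (∫ x in Ioi (0 : ℝ), |h x|) := by
  set μ : Measure ℝ := volume.restrict (Ioi 0) with hμdef
  have mK : Measurable (fun p : ℝ × ℝ × ℝ × ℝ =>
      Phi p.1 p.2.1 p.2.2.1 p.2.2.2 * f p.2.1 * g p.2.2.1 * h p.2.2.2) :=
    ((mPhi.mul (mf.comp (by fun_prop))).mul (mg.comp (by fun_prop))).mul
      (mh.comp (by fun_prop : Measurable fun p : ℝ × ℝ × ℝ × ℝ => p.2.2.2))
  -- strong measurability of P
  have smP : StronglyMeasurable (P f g h) := by
    have mF3 : Measurable (fun p : ((ℝ × ℝ) × ℝ) × ℝ =>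
        Phi p.1.1.1 p.1.1.2 p.1.2 p.2 * f p.1.1.2 * g p.1.2 * h p.2) :=
      mK.comp (by fun_prop : Measurable fun p : ((ℝ × ℝ) × ℝ) × ℝ =>
        (p.1.1.1, p.1.1.2, p.1.2, p.2))
    have sm2 : StronglyMeasurable (fun q : (ℝ × ℝ) × ℝ =>
        ∫ w, Phi q.1.1 q.1.2 q.2 w * f q.1.2 * g q.2 * h w ∂μ) :=
      mF3.stronglyMeasurable.integral_prod_right'
    have sm1 : StronglyMeasurable (fun q : ℝ × ℝ =>
        ∫ v, ∫ w, Phi q.1 q.2 v w * f q.2 * g v * h w ∂μ ∂μ) :=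
      sm2.integral_prod_right'
    have sm0 : StronglyMeasurable (fun x : ℝ =>
        ∫ u, ∫ v, ∫ w, Phi x u v w * f u * g v * h w ∂μ ∂μ ∂μ) :=
      sm1.integral_prod_right'
    exact stronglyMeasurable_const.mul sm0
  have mNN : Measurable (fun p : ℝ × ℝ × ℝ × ℝ =>
      AA f g h p.1 p.2.1 p.2.2.1 p.2.2.2) := by
    unfold AA; exact mK.enorm
  -- pointwise bound on ‖P x‖
  have hb : ∀ x : ℝ, (‖P f g h x‖₊ : ENNReal) ≤
      ENNReal.ofReal (1/π) * ∫⁻ u, ∫⁻ v, ∫⁻ w, AA f g h x u v w ∂μ ∂μ ∂μ := by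
    intro x
    have h0 : (‖P f g h x‖₊ : ENNReal) = ENNReal.ofReal (1/π) *
        (‖∫ u, ∫ v, ∫ w, Phi x u v w * f u * g v * h w ∂μ ∂μ ∂μ‖₊ : ENNReal) := by
      rw [show P f g h x = (1/π) * ∫ u, ∫ v, ∫ w, Phi x u v w * f u * g v * h w ∂μ ∂μ ∂μ
        from rfl, nnnorm_mul, ENNReal.coe_mul, (show (‖(1/π:ℝ)‖₊ : ENNReal) = ENNReal.ofReal (1/π) from Real.enorm_eq_ofReal (by positivity))]
    rw [h0]
    refine mul_le_mul_right ?_ _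
    simp only [AA]
    refine le_trans (enorm_integral_le_lintegral_enorm _) (lintegral_mono fun u => ?_)
    refine le_trans (enorm_integral_le_lintegral_enorm _) (lintegral_mono fun v => ?_)
    exact enorm_integral_le_lintegral_enorm _
  set Lf : ENNReal := ∫⁻ u, (‖f u‖₊ : ENNReal) ∂μ with hLf
  set Lg : ENNReal := ∫⁻ v, (‖g v‖₊ : ENNReal) ∂μ with hLg
  set Lh : ENNReal := ∫⁻ w, (‖h w‖₊ : ENNReal) ∂μ with hLh
  have hLfval : Lf = ENNReal.ofReal (∫ x in Ioi (0:ℝ), |f x|) := by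
    rw [hLf, ← (show ENNReal.ofReal (∫ x in Ioi (0:ℝ), ‖f x‖) = ∫⁻ u, (‖f u‖₊ : ENNReal) ∂μ from
      ofReal_integral_norm_eq_lintegral_enorm hf)]
    simp [Real.norm_eq_abs]
  have hLgval : Lg = ENNReal.ofReal (∫ x in Ioi (0:ℝ), |g x|) := by
    rw [hLg, ← (show ENNReal.ofReal (∫ x in Ioi (0:ℝ), ‖g x‖) = ∫⁻ v, (‖g v‖₊ : ENNReal) ∂μ from
      ofReal_integral_norm_eq_lintegral_enorm hg)]
    simp [Real.norm_eq_abs]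
  have hLhval : Lh = ENNReal.ofReal (∫ x in Ioi (0:ℝ), |h x|) := by
    rw [hLh, ← (show ENNReal.ofReal (∫ x in Ioi (0:ℝ), ‖h x‖) = ∫⁻ w, (‖h w‖₊ : ENNReal) ∂μ from
      ofReal_integral_norm_eq_lintegral_enorm hh)]
    simp [Real.norm_eq_abs]
  have hLh_ne : Lh ≠ ⊤ := by rw [hLhval]; exact ENNReal.ofReal_ne_top
  have hLgLh_ne : Lg * Lh ≠ ⊤ :=
    ENNReal.mul_ne_top (by rw [hLgval]; exact ENNReal.ofReal_ne_top) hLh_ne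
  -- Tonelli: swap x to the inside
  have swap1 : ∫⁻ x, (∫⁻ u, ∫⁻ v, ∫⁻ w, AA f g h x u v w ∂μ ∂μ ∂μ) ∂μ
      = ∫⁻ u, ∫⁻ x, (∫⁻ v, ∫⁻ w, AA f g h x u v w ∂μ ∂μ) ∂μ ∂μ := by
    exact lintegral_lintegral_swap (mswap1 mNN μ).aemeasurable
  have swap2 : ∀ u : ℝ, ∫⁻ x, (∫⁻ v, ∫⁻ w, AA f g h x u v w ∂μ ∂μ) ∂μ
      = ∫⁻ v, ∫⁻ x, (∫⁻ w, AA f g h x u v w ∂μ) ∂μ ∂μ := fun u =>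
    lintegral_lintegral_swap (mswap2 mNN μ u).aemeasurable
  have swap3 : ∀ u v : ℝ, ∫⁻ x, (∫⁻ w, AA f g h x u v w ∂μ) ∂μ
      = ∫⁻ w, ∫⁻ x, AA f g h x u v w ∂μ ∂μ := fun u v =>
    lintegral_lintegral_swap (mswap3 mNN u v).aemeasurable
  -- value of the innermost integral
  have inner : ∀ u ∈ Ioi (0:ℝ), ∀ v ∈ Ioi (0:ℝ), ∀ w ∈ Ioi (0:ℝ),
      ∫⁻ x, AA f g h x u v w ∂μ
        = ENNReal.ofReal π * ((‖f u‖₊ : ENNReal) * ((‖g v‖₊ : ENNReal) * ‖h w‖₊)) := by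
    intro u hu v hv w hw
    have hs : 0 < v + w := add_pos hv hw
    simp only [AA]
    simp_rw [nnnorm_mul, ENNReal.coe_mul]
    rw [lintegral_mul_const' _ _ ENNReal.coe_ne_top, lintegral_mul_const' _ _ ENNReal.coe_ne_top,
      lintegral_mul_const' _ _ ENNReal.coe_ne_top]
    rw [show (∫⁻ x, (‖Phi x u v w‖₊ : ENNReal) ∂μ) = ENNReal.ofReal π from key_lint u v w hs]
    ring
  -- total Tonelli computation
  have T : ∫⁻ x, (∫⁻ u, ∫⁻ v, ∫⁻ w, AA f g h x u v w ∂μ ∂μ ∂μ) ∂μ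
      = ENNReal.ofReal π * (Lf * (Lg * Lh)) := by
    rw [swap1]
    calc ∫⁻ u, ∫⁻ x, (∫⁻ v, ∫⁻ w, AA f g h x u v w ∂μ ∂μ) ∂μ ∂μ
        = ∫⁻ u, ∫⁻ v, ∫⁻ w, ∫⁻ x, AA f g h x u v w ∂μ ∂μ ∂μ ∂μ := by
          refine lintegral_congr fun u => ?_
          rw [swap2 u]
          exact lintegral_congr fun v => swap3 u v
      _ = ∫⁻ u, ∫⁻ v, ∫⁻ w, ENNReal.ofReal π *
            ((‖f u‖₊ : ENNReal) * ((‖g v‖₊ : ENNReal) * ‖h w‖₊)) ∂μ ∂μ ∂μ := by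
          refine lintegral_congr_ae ?_
          filter_upwards [ae_restrict_mem measurableSet_Ioi] with u hu
          refine lintegral_congr_ae ?_
          filter_upwards [ae_restrict_mem measurableSet_Ioi] with v hv
          refine lintegral_congr_ae ?_
          filter_upwards [ae_restrict_mem measurableSet_Ioi] with w hw
          exact inner u hu v hv w hw
      _ = ENNReal.ofReal π * (Lf * (Lg * Lh)) := by
          have stepw : ∀ u v : ℝ, ∫⁻ w, ENNReal.ofReal π *
              ((‖f u‖₊ : ENNReal) * ((‖g v‖₊ : ENNReal) * ‖h w‖₊)) ∂μ
              = ENNReal.ofReal π * ((‖f u‖₊ : ENNReal) * ((‖g v‖₊ : ENNReal) * Lh)) := by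
            intro u v
            rw [lintegral_const_mul' _ _ ENNReal.ofReal_ne_top,
              lintegral_const_mul' _ _ ENNReal.coe_ne_top,
              lintegral_const_mul' _ _ ENNReal.coe_ne_top]
          have stepv : ∀ u : ℝ, ∫⁻ v, ENNReal.ofReal π *
              ((‖f u‖₊ : ENNReal) * ((‖g v‖₊ : ENNReal) * Lh)) ∂μ
              = ENNReal.ofReal π * ((‖f u‖₊ : ENNReal) * (Lg * Lh)) := by
            intro u
            rw [lintegral_const_mul' _ _ ENNReal.ofReal_ne_top,
              lintegral_const_mul' _ _ ENNReal.coe_ne_top,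
              lintegral_mul_const' _ _ hLh_ne]
          have stepu : ∫⁻ u, ENNReal.ofReal π *
              ((‖f u‖₊ : ENNReal) * (Lg * Lh)) ∂μ
              = ENNReal.ofReal π * (Lf * (Lg * Lh)) := by
            rw [lintegral_const_mul' _ _ ENNReal.ofReal_ne_top,
              lintegral_mul_const' _ _ hLgLh_ne]
          rw [lintegral_congr fun u => (lintegral_congr fun v => stepw u v).trans (stepv u),
            stepu]
  -- the final bound on the L¹ norm of P
  have final : ∫⁻ x, (‖P f g h x‖₊ : ENNReal) ∂μ ≤ Lf * (Lg * Lh) := by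
    calc ∫⁻ x, (‖P f g h x‖₊ : ENNReal) ∂μ
        ≤ ∫⁻ x, ENNReal.ofReal (1/π) * (∫⁻ u, ∫⁻ v, ∫⁻ w, AA f g h x u v w ∂μ ∂μ ∂μ) ∂μ :=
          lintegral_mono hb
      _ = ENNReal.ofReal (1/π) * ∫⁻ x, (∫⁻ u, ∫⁻ v, ∫⁻ w, AA f g h x u v w ∂μ ∂μ ∂μ) ∂μ :=
          lintegral_const_mul' _ _ ENNReal.ofReal_ne_top
      _ = ENNReal.ofReal (1/π) * (ENNReal.ofReal π * (Lf * (Lg * Lh))) := by rw [T]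
      _ = Lf * (Lg * Lh) := by
          rw [← mul_assoc, ← ENNReal.ofReal_mul (by positivity),
            one_div_mul_cancel Real.pi_ne_zero, ENNReal.ofReal_one, one_mul]
  have hle : Lf * (Lg * Lh) = ENNReal.ofReal
      ((∫ x in Ioi (0:ℝ), |f x|) * ((∫ x in Ioi (0:ℝ), |g x|) * (∫ x in Ioi (0:ℝ), |h x|))) := by
    rw [hLfval, hLgval, hLhval, ENNReal.ofReal_mul (integral_nonneg fun x => abs_nonneg _),
      ENNReal.ofReal_mul (integral_nonneg fun x => abs_nonneg _)]
  have hInt : IntegrableOn (P f g h) (Ioi 0) := by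
    refine ⟨smP.aestronglyMeasurable, ?_⟩
    show (∫⁻ x, (‖P f g h x‖₊ : ENNReal) ∂μ) < ⊤
    exact lt_of_le_of_lt final (by rw [hle]; exact ENNReal.ofReal_lt_top)
  refine ⟨hInt, ?_⟩
  have habs : (∫ x in Ioi (0:ℝ), |P f g h x|) = (∫⁻ x, (‖P f g h x‖₊ : ENNReal) ∂μ).toReal := by
    rw [← (show ∫ x in Ioi (0:ℝ), ‖P f g h x‖ = (∫⁻ x, (‖P f g h x‖₊ : ENNReal) ∂μ).toReal from
      integral_norm_eq_lintegral_enorm smP.aestronglyMeasurable)]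
    simp [Real.norm_eq_abs]
  rw [habs]
  calc (∫⁻ x, (‖P f g h x‖₊ : ENNReal) ∂μ).toReal
      ≤ (Lf * (Lg * Lh)).toReal := ENNReal.toReal_mono (by rw [hle]; exact ENNReal.ofReal_ne_top)
        final
    _ = (∫ x in Ioi (0:ℝ), |f x|) * (∫ x in Ioi (0:ℝ), |g x|) * (∫ x in Ioi (0:ℝ), |h x|) := by
        rw [hle, ENNReal.toReal_ofReal (by positivity)]
        ring

theorem stmt_3 (f g h : ℝ → ℝ)
    (hf : IntegrableOn f (Ioi 0)) (hg : IntegrableOn g (Ioi 0)) (hh : IntegrableOn h (Ioi 0)) :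
    IntegrableOn (P f g h) (Ioi 0) ∧
      (∫ x in Ioi (0 : ℝ), |P f g h x|) ≤
        (∫ x in Ioi (0 : ℝ), |f x|) * (∫ x in Ioi (0 : ℝ), |g x|) *
          (∫ x in Ioi (0 : ℝ), |h x|) := by
  set μ : Measure ℝ := volume.restrict (Ioi 0) with hμdef
  set f' := hf.1.mk f with hf'def
  set g' := hg.1.mk g with hg'def
  set h' := hh.1.mk h with hh'def
  have hfe : f =ᵐ[μ] f' := hf.1.ae_eq_mk
  have hge : g =ᵐ[μ] g' := hg.1.ae_eq_mk
  have hhe : h =ᵐ[μ] h' := hh.1.ae_eq_mk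
  have hf' : IntegrableOn f' (Ioi 0) := hf.congr hfe
  have hg' : IntegrableOn g' (Ioi 0) := hg.congr hge
  have hh' : IntegrableOn h' (Ioi 0) := hh.congr hhe
  have hPeq : P f g h = P f' g' h' := by
    funext x
    unfold P
    congr 1
    refine integral_congr_ae ?_
    filter_upwards [hfe] with u hu
    refine integral_congr_ae ?_
    filter_upwards [hge] with v hv
    refine integral_congr_ae ?_
    filter_upwards [hhe] with w hw
    rw [hu, hv, hw]
  have hfa : (∫ x in Ioi (0:ℝ), |f x|) = ∫ x in Ioi (0:ℝ), |f' x| :=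
    integral_congr_ae (hfe.mono fun x hx => by simp only [hx])
  have hga : (∫ x in Ioi (0:ℝ), |g x|) = ∫ x in Ioi (0:ℝ), |g' x| :=
    integral_congr_ae (hge.mono fun x hx => by simp only [hx])
  have hha : (∫ x in Ioi (0:ℝ), |h x|) = ∫ x in Ioi (0:ℝ), |h' x| :=
    integral_congr_ae (hhe.mono fun x hx => by simp only [hx])
  rw [hPeq, hfa, hga, hha]
  exact main_meas f' g' h' hf.1.measurable_mk hg.1.measurable_mk hh.1.measurable_mk hf' hg' hh'
end

section
/- Let ρ₁, ρ₂, ρ₃ be non-vanishing positive functions on ℝ₊ such that P(ρ₁,ρ₂,ρ₃) is well-defined, and let p > 1. Then for F_j ∈ L^p(ℝ₊, ρ_j), j = 1,2,3, ‖P(F₁ρ₁, F₂ρ₂, F₃ρ₃) · P(ρ₁,ρ₂,ρ₃)^{1/p - 1}‖_{L^p(ℝ₊)} ≤ ∏_{j=1}^3 ‖F_j‖_{L^p(ℝ₊, ρ_j)}. -/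
open MeasureTheory Real Set Filter

lemma phi_nonneg {v w : ℝ} (hvw : 0 < v + w) (x u : ℝ) : 0 ≤ Phi x u v w := by
  unfold Phi
  have h1 : (0:ℝ) < (v + w) ^ 2 + (x + u) ^ 2 := by positivity
  have h2 : (0:ℝ) < (v + w) ^ 2 + (x - u) ^ 2 := by positivity
  positivity

lemma phi_pos {v w : ℝ} (hvw : 0 < v + w) (x u : ℝ) : 0 < Phi x u v w := by
  unfold Phi
  have h1 : (0:ℝ) < (v + w) ^ 2 + (x + u) ^ 2 := by positivity
  have h2 : (0:ℝ) < (v + w) ^ 2 + (x - u) ^ 2 := by positivity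
  positivity

lemma measurable_phi : Measurable fun z : ℝ × ℝ × ℝ × ℝ => Phi z.1 z.2.1 z.2.2.1 z.2.2.2 := by
  unfold Phi
  fun_prop

lemma arctan_deriv (a u : ℝ) (ha : 0 < a) (x : ℝ) :
    HasDerivAt (fun x => Real.arctan ((x + u) / a)) (a / (a ^ 2 + (x + u) ^ 2)) x := by
  have h1 : HasDerivAt (fun x : ℝ => (x + u) / a) (1 / a) x := by
    simpa using ((hasDerivAt_id x).add_const u).div_const a
  have := (Real.hasDerivAt_arctan ((x + u) / a)).comp x h1
  refine this.congr_deriv ?_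
  have ha2 : (a:ℝ) ≠ 0 := ha.ne'
  field_simp

lemma tendsto_aux (a u : ℝ) (ha : 0 < a) :
    Tendsto (fun x : ℝ => Real.arctan ((x + u) / a)) atTop (nhds (π / 2)) := by
  have h1 : Tendsto (fun x : ℝ => (x + u) / a) atTop atTop :=
    (tendsto_atTop_add_const_right atTop u tendsto_id).atTop_div_const ha
  exact (Real.tendsto_arctan_atTop.mono_right nhdsWithin_le_nhds).comp h1

lemma poisson_core {u v w : ℝ} (hu : 0 < u) (hv : 0 < v) (hw : 0 < w) :
    IntegrableOn (fun x => Phi x u v w) (Ioi (0:ℝ)) ∧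
      ∫ x in Ioi (0:ℝ), Phi x u v w = π := by
  set a := v + w with hadef
  have ha : 0 < a := by positivity
  set g : ℝ → ℝ := fun x => Real.arctan ((x + u) / a) + Real.arctan ((x - u) / a) with hg
  have hderiv : ∀ x ∈ Ioi (0:ℝ), HasDerivAt g (Phi x u v w) x := by
    intro x _
    have h1 := arctan_deriv a u ha x
    have h2 := arctan_deriv a (-u) ha x
    simp only [← sub_eq_add_neg] at h2
    have heq : Phi x u v w = a / (a ^ 2 + (x + u) ^ 2) + a / (a ^ 2 + (x - u) ^ 2) := by
      rw [hadef]; rfl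
    rw [heq]
    exact h1.add h2
  have hcont : ContinuousWithinAt g (Ici (0:ℝ)) 0 := by
    apply Continuous.continuousWithinAt
    exact (Real.continuous_arctan.comp (by fun_prop)).add (Real.continuous_arctan.comp (by fun_prop))
  have hpos : ∀ x ∈ Ioi (0:ℝ), 0 ≤ Phi x u v w := fun x _ => phi_nonneg (by positivity) x u
  have htend : Tendsto g atTop (nhds π) := by
    have h1 := tendsto_aux a u ha
    have h2 := tendsto_aux a (-u) ha
    simp only [← sub_eq_add_neg] at h2
    have h3 := h1.add h2
    have hpi : π / 2 + π / 2 = π := by ring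
    rw [hpi] at h3
    exact h3
  have hg0 : g 0 = 0 := by
    simp [hg, zero_sub, zero_add, Real.arctan_neg]
    rw [neg_div, Real.arctan_neg]
    ring
  constructor
  · have := integrableOn_Ioi_deriv_of_nonneg hcont hderiv hpos htend
    exact this
  · have := integral_Ioi_of_hasDerivAt_of_nonneg hcont hderiv hpos htend
    rw [this, hg0, sub_zero]

section helpers
variable {α β γ : Type*} [MeasurableSpace α] [MeasurableSpace β] [MeasurableSpace γ]
  {μ : Measure α} {ν : Measure β} {κ : Measure γ}

lemma lintegral3_eq [SFinite ν] [SFinite κ] {f g : α × β × γ → ENNReal}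
    (hg : AEMeasurable g (μ.prod (ν.prod κ))) (h : f =ᵐ[μ.prod (ν.prod κ)] g) :
    ∫⁻ x, ∫⁻ y, ∫⁻ z, f (x, y, z) ∂κ ∂ν ∂μ = ∫⁻ t, g t ∂(μ.prod (ν.prod κ)) := by
  set g' := hg.mk g with hg'
  have hmg' : Measurable g' := hg.measurable_mk
  have hfg' : f =ᵐ[μ.prod (ν.prod κ)] g' := h.trans hg.ae_eq_mk
  have hae := Measure.ae_ae_of_ae_prod hfg'
  have step1 : ∫⁻ x, ∫⁻ y, ∫⁻ z, f (x, y, z) ∂κ ∂ν ∂μ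
      = ∫⁻ x, ∫⁻ s, g' (x, s) ∂(ν.prod κ) ∂μ := by
    refine lintegral_congr_ae (hae.mono fun x hx => ?_)
    show ∫⁻ y, ∫⁻ z, f (x, y, z) ∂κ ∂ν = ∫⁻ s, g' (x, s) ∂(ν.prod κ)
    have hae2 := Measure.ae_ae_of_ae_prod hx
    have : ∫⁻ y, ∫⁻ z, f (x, y, z) ∂κ ∂ν = ∫⁻ y, ∫⁻ z, g' (x, y, z) ∂κ ∂ν := by
      refine lintegral_congr_ae (hae2.mono fun y hy => lintegral_congr_ae (hy.mono fun z hz => hz))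
    rw [this]
    exact (lintegral_prod _ ((hmg'.comp (measurable_prodMk_left)).aemeasurable)).symm
  rw [step1, ← lintegral_prod _ hg.measurable_mk.aemeasurable]
  exact lintegral_congr_ae hg.ae_eq_mk.symm

lemma ae_comp_fst [SFinite μ] [SFinite ν] {f g : α → ENNReal} (h : f =ᵐ[μ] g) :
    (fun t : α × β => f t.1) =ᵐ[μ.prod ν] fun t => g t.1 :=
  MeasureTheory.Measure.quasiMeasurePreserving_fst.ae_eq_comp h

lemma ae_comp_snd [SFinite μ] [SFinite ν] {f g : β → ENNReal} (h : f =ᵐ[ν] g) :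
    (fun t : α × β => f t.2) =ᵐ[μ.prod ν] fun t => g t.2 :=
  MeasureTheory.Measure.quasiMeasurePreserving_snd.ae_eq_comp h

end helpers

/-- ofReal of a norm of an integral is at most the lintegral of ofReal of norms. -/
lemma ofReal_norm_integral_le {f : ℝ → ℝ} (μ : Measure ℝ) :
    ENNReal.ofReal ‖∫ x, f x ∂μ‖ ≤ ∫⁻ x, ENNReal.ofReal ‖f x‖ ∂μ :=
  le_trans (ENNReal.ofReal_le_ofReal (norm_integral_le_lintegral_norm f)) ENNReal.ofReal_toReal_le

lemma alg_aux {pi j c p q : ℝ} (hpi : 0 < pi) (hj : 0 ≤ j) (hc : 0 < c) (hp0 : p ≠ 0)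
    (hq : 1/p + 1/q = 1) :
    ((1/pi) * (j^(1/p) * (pi*c)^(1/q)))^p * (c^(1/p-1))^p = (1/pi) * j := by
  have h1 : ((1/pi) * (j^(1/p) * (pi*c)^(1/q)))^p
      = (1/pi)^p * ((j^(1/p))^p * (((pi)^(1/q))^p * ((c)^(1/q))^p)) := by
    rw [Real.mul_rpow (by positivity) (by positivity),
      Real.mul_rpow (by positivity) (by positivity),
      Real.mul_rpow hpi.le hc.le,
      Real.mul_rpow (by positivity) (by positivity)]
  rw [h1]
  rw [← Real.rpow_mul hj, one_div_mul_cancel hp0, Real.rpow_one]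
  rw [← Real.rpow_mul hpi.le, ← Real.rpow_mul hc.le, ← Real.rpow_mul hc.le]
  rw [one_div, ← Real.rpow_neg_one pi, ← Real.rpow_mul hpi.le]
  have e1 : (-1:ℝ) * p = -p := by ring
  have e2 : 1/q * p = p - 1 := by
    have : 1/q = 1 - 1/p := by linarith
    rw [this]; field_simp
  have e3 : (1/p - 1) * p = 1 - p := by field_simp
  rw [e1, e2, e3]
  have grp : pi ^ (-p) * (j * (pi ^ (p-1) * c ^ (p-1))) * c ^ (1-p)
      = (pi ^ (-p) * pi ^ (p-1)) * j * (c ^ (p-1) * c ^ (1-p)) := by ring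
  rw [grp, ← Real.rpow_add hpi, ← Real.rpow_add hc,
    show (-p + (p - 1) : ℝ) = -1 by ring, show ((p - 1) + (1 - p) : ℝ) = 0 by ring,
    Real.rpow_zero, Real.rpow_neg_one, mul_one]


set_option maxHeartbeats 1000000 in
theorem stmt_16 (ρ₁ ρ₂ ρ₃ : ℝ → ℝ)
    (hρ₁ : ∀ x > (0 : ℝ), 0 < ρ₁ x) (hρ₂ : ∀ x > (0 : ℝ), 0 < ρ₂ x)
    (hρ₃ : ∀ x > (0 : ℝ), 0 < ρ₃ x)
    (hwell : ∀ x > (0 : ℝ), IntegrableOn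
      (fun t : ℝ × ℝ × ℝ => Phi x t.1 t.2.1 t.2.2 * ρ₁ t.1 * ρ₂ t.2.1 * ρ₃ t.2.2)
      (Ioi 0 ×ˢ Ioi 0 ×ˢ Ioi 0))
    (p : ℝ) (hp : 1 < p) (F₁ F₂ F₃ : ℝ → ℝ)
    (hF₁ : IntegrableOn (fun x => |F₁ x| ^ p * ρ₁ x) (Ioi 0))
    (hF₂ : IntegrableOn (fun x => |F₂ x| ^ p * ρ₂ x) (Ioi 0))
    (hF₃ : IntegrableOn (fun x => |F₃ x| ^ p * ρ₃ x) (Ioi 0)) :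
    (∫ x in Ioi (0 : ℝ),
        |P (fun u => F₁ u * ρ₁ u) (fun v => F₂ v * ρ₂ v) (fun w => F₃ w * ρ₃ w) x *
          P ρ₁ ρ₂ ρ₃ x ^ (1 / p - 1)| ^ p) ^ (1 / p) ≤
      (∫ x in Ioi (0 : ℝ), |F₁ x| ^ p * ρ₁ x) ^ (1 / p) *
        (∫ x in Ioi (0 : ℝ), |F₂ x| ^ p * ρ₂ x) ^ (1 / p) *
        (∫ x in Ioi (0 : ℝ), |F₃ x| ^ p * ρ₃ x) ^ (1 / p) := by
  have hppos : (0:ℝ) < p := lt_trans one_pos hp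
  have hpne : p ≠ 0 := hppos.ne'
  have hip : (0:ℝ) ≤ 1 / p := by positivity
  set q : ℝ := p.conjExponent with hqdef
  have hpq : p.HolderConjugate q := Real.HolderConjugate.conjExponent hp
  have hq1 : 1 / p + 1 / q = 1 := by
    have := hpq.inv_add_inv_eq_one; rw [one_div, one_div]; exact this
  have hiq : (0:ℝ) ≤ 1 / q := by
    have := hpq.symm.pos; positivity
  set μ : Measure ℝ := volume.restrict (Ioi 0) with hμdef
  set PP : Measure (ℝ × ℝ × ℝ) := μ.prod (μ.prod μ) with hPPdef
  have hPP : PP = (volume : Measure (ℝ×ℝ×ℝ)).restrict (Ioi 0 ×ˢ Ioi 0 ×ˢ Ioi 0) := by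
    rw [hPPdef, hμdef, Measure.prod_restrict, Measure.prod_restrict,
      ← Measure.volume_eq_prod, ← Measure.volume_eq_prod]
  have hS : MeasurableSet (Ioi (0:ℝ) ×ˢ Ioi (0:ℝ) ×ˢ Ioi (0:ℝ)) :=
    measurableSet_Ioi.prod (measurableSet_Ioi.prod measurableSet_Ioi)
  have haemem : ∀ᵐ t ∂PP, t ∈ Ioi (0:ℝ) ×ˢ Ioi (0:ℝ) ×ˢ Ioi (0:ℝ) := by
    rw [hPP]; exact ae_restrict_mem hS
  -- nonnegativity of the weights on the domain
  have hnn₁ : 0 ≤ᵐ[μ] fun x => |F₁ x| ^ p * ρ₁ x := by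
    filter_upwards [ae_restrict_mem measurableSet_Ioi] with x hx
    exact mul_nonneg (Real.rpow_nonneg (abs_nonneg _) _) (hρ₁ x hx).le
  have hnn₂ : 0 ≤ᵐ[μ] fun x => |F₂ x| ^ p * ρ₂ x := by
    filter_upwards [ae_restrict_mem measurableSet_Ioi] with x hx
    exact mul_nonneg (Real.rpow_nonneg (abs_nonneg _) _) (hρ₂ x hx).le
  have hnn₃ : 0 ≤ᵐ[μ] fun x => |F₃ x| ^ p * ρ₃ x := by
    filter_upwards [ae_restrict_mem measurableSet_Ioi] with x hx
    exact mul_nonneg (Real.rpow_nonneg (abs_nonneg _) _) (hρ₃ x hx).le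
  set R₁ : ℝ := ∫ x in Ioi (0:ℝ), |F₁ x| ^ p * ρ₁ x with hR₁
  set R₂ : ℝ := ∫ x in Ioi (0:ℝ), |F₂ x| ^ p * ρ₂ x with hR₂
  set R₃ : ℝ := ∫ x in Ioi (0:ℝ), |F₃ x| ^ p * ρ₃ x with hR₃
  have hR₁0 : 0 ≤ R₁ := integral_nonneg_of_ae hnn₁
  have hR₂0 : 0 ≤ R₂ := integral_nonneg_of_ae hnn₂
  have hR₃0 : 0 ≤ R₃ := integral_nonneg_of_ae hnn₃
  -- ENNReal-valued weight functions and their measurable representatives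
  set k₁ : ℝ → ENNReal := fun x => ENNReal.ofReal (|F₁ x| ^ p * ρ₁ x) with hk₁def
  set k₂ : ℝ → ENNReal := fun x => ENNReal.ofReal (|F₂ x| ^ p * ρ₂ x) with hk₂def
  set k₃ : ℝ → ENNReal := fun x => ENNReal.ofReal (|F₃ x| ^ p * ρ₃ x) with hk₃def
  have hk₁m : AEMeasurable k₁ μ := ENNReal.measurable_ofReal.comp_aemeasurable hF₁.1.aemeasurable
  have hk₂m : AEMeasurable k₂ μ := ENNReal.measurable_ofReal.comp_aemeasurable hF₂.1.aemeasurable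
  have hk₃m : AEMeasurable k₃ μ := ENNReal.measurable_ofReal.comp_aemeasurable hF₃.1.aemeasurable
  set k₁' := hk₁m.mk k₁ with hk₁'def
  set k₂' := hk₂m.mk k₂ with hk₂'def
  set k₃' := hk₃m.mk k₃ with hk₃'def
  have hlk₁ : ∫⁻ x, k₁' x ∂μ = ENNReal.ofReal R₁ := by
    rw [← lintegral_congr_ae hk₁m.ae_eq_mk, hR₁,
      ofReal_integral_eq_lintegral_ofReal hF₁ hnn₁]
  have hlk₂ : ∫⁻ x, k₂' x ∂μ = ENNReal.ofReal R₂ := by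
    rw [← lintegral_congr_ae hk₂m.ae_eq_mk, hR₂,
      ofReal_integral_eq_lintegral_ofReal hF₂ hnn₂]
  have hlk₃ : ∫⁻ x, k₃' x ∂μ = ENNReal.ofReal R₃ := by
    rw [← lintegral_congr_ae hk₃m.ae_eq_mk, hR₃,
      ofReal_integral_eq_lintegral_ofReal hF₃ hnn₃]
  -- the measurable Φ kernel (valued in ENNReal)
  set Φe : ℝ → ℝ × ℝ × ℝ → ENNReal :=
    fun x t => ENNReal.ofReal (Phi x t.1 t.2.1 t.2.2) with hΦedef
  have hΦem : ∀ x, Measurable (Φe x) := by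
    intro x
    exact ENNReal.measurable_ofReal.comp (measurable_phi.comp (measurable_const.prodMk measurable_id))
  -- the measurable version of the |F|^p-weight on the product
  set A' : ℝ × ℝ × ℝ → ENNReal := fun t => k₁' t.1 * k₂' t.2.1 * k₃' t.2.2 with hA'def
  have hA'm : Measurable A' := by
    apply Measurable.mul
    apply Measurable.mul
    · exact hk₁m.measurable_mk.comp measurable_fst
    · exact hk₂m.measurable_mk.comp (measurable_fst.comp measurable_snd)
    · exact hk₃m.measurable_mk.comp (measurable_snd.comp measurable_snd)
  have hA'ae : (fun t : ℝ×ℝ×ℝ => k₁ t.1 * k₂ t.2.1 * k₃ t.2.2) =ᵐ[PP] A' := by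
    have h1 : (fun t : ℝ×ℝ×ℝ => k₁ t.1) =ᵐ[PP] fun t => k₁' t.1 := ae_comp_fst hk₁m.ae_eq_mk
    have h2 : (fun t : ℝ×ℝ×ℝ => k₂ t.2.1) =ᵐ[PP] fun t => k₂' t.2.1 := by
      exact ae_comp_snd (ν := μ.prod μ) (ae_comp_fst hk₂m.ae_eq_mk)
    have h3 : (fun t : ℝ×ℝ×ℝ => k₃ t.2.2) =ᵐ[PP] fun t => k₃' t.2.2 := by
      exact ae_comp_snd (ν := μ.prod μ) (ae_comp_snd hk₃m.ae_eq_mk)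
    filter_upwards [h1, h2, h3] with t e1 e2 e3
    rw [e1, e2, e3]
  -- the a.e.-measurable product weight ρ₁ρ₂ρ₃
  set W : ℝ × ℝ × ℝ → ENNReal :=
    fun t => ENNReal.ofReal (ρ₁ t.1 * ρ₂ t.2.1 * ρ₃ t.2.2) with hWdef
  have hWm : AEMeasurable W PP := by
    have h0 : AEStronglyMeasurable
        (fun t : ℝ × ℝ × ℝ => Phi 1 t.1 t.2.1 t.2.2 * ρ₁ t.1 * ρ₂ t.2.1 * ρ₃ t.2.2) PP := by
      rw [hPP]; exact (hwell 1 one_pos).1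
    have hphi1 : Measurable (fun t : ℝ × ℝ × ℝ => Phi 1 t.1 t.2.1 t.2.2) :=
      measurable_phi.comp (measurable_const.prodMk measurable_id)
    have hmult : AEMeasurable
        (fun t : ℝ × ℝ × ℝ => (Phi 1 t.1 t.2.1 t.2.2 * ρ₁ t.1 * ρ₂ t.2.1 * ρ₃ t.2.2) *
          (Phi 1 t.1 t.2.1 t.2.2)⁻¹) PP :=
      h0.aemeasurable.mul hphi1.inv.aemeasurable
    have heq : (fun t : ℝ × ℝ × ℝ => (Phi 1 t.1 t.2.1 t.2.2 * ρ₁ t.1 * ρ₂ t.2.1 * ρ₃ t.2.2) *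
          (Phi 1 t.1 t.2.1 t.2.2)⁻¹) =ᵐ[PP]
        fun t => ρ₁ t.1 * ρ₂ t.2.1 * ρ₃ t.2.2 := by
      filter_upwards [haemem] with t ht
      have hphi : Phi 1 t.1 t.2.1 t.2.2 ≠ 0 := (phi_pos (by
        have := ht.2.1; have := ht.2.2; exact add_pos ht.2.1 ht.2.2) 1 t.1).ne'
      field_simp
    exact ENNReal.measurable_ofReal.comp_aemeasurable (hmult.congr heq)
  set W' := hWm.mk W with hW'def
  have hW'm : Measurable W' := hWm.measurable_mk
  -- the weight integral: C x = ofReal (π * P ρ₁ ρ₂ ρ₃ x), for x > 0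
  have hCval : ∀ x > (0:ℝ), (∫⁻ t, Φe x t * W' t ∂PP) = ENNReal.ofReal (π * P ρ₁ ρ₂ ρ₃ x)
      ∧ 0 ≤ P ρ₁ ρ₂ ρ₃ x := by
    intro x hx
    set f : ℝ × ℝ × ℝ → ℝ :=
      fun t => Phi x t.1 t.2.1 t.2.2 * ρ₁ t.1 * ρ₂ t.2.1 * ρ₃ t.2.2 with hfdef
    have hI : Integrable f PP := by rw [hPP]; exact hwell x hx
    have hfnn : 0 ≤ᵐ[PP] f := by
      filter_upwards [haemem] with t ht
      have h1 : 0 ≤ Phi x t.1 t.2.1 t.2.2 := phi_nonneg (add_pos ht.2.1 ht.2.2) x t.1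
      have := (hρ₁ t.1 ht.1).le
      have := (hρ₂ t.2.1 ht.2.1).le
      have := (hρ₃ t.2.2 ht.2.2).le
      positivity
    have hiter : π * P ρ₁ ρ₂ ρ₃ x = ∫ t, f t ∂PP := by
      have hstep : ∫ u in Ioi (0:ℝ), ∫ v in Ioi (0:ℝ), ∫ w in Ioi (0:ℝ),
          Phi x u v w * ρ₁ u * ρ₂ v * ρ₃ w = ∫ t, f t ∂PP := by
        have h2 : ∀ᵐ u ∂μ, (∫ v in Ioi (0:ℝ), ∫ w in Ioi (0:ℝ),
            Phi x u v w * ρ₁ u * ρ₂ v * ρ₃ w) = ∫ s, f (u, s) ∂(μ.prod μ) := by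
          filter_upwards [hI.prod_right_ae] with u hu
          exact integral_integral hu
        calc ∫ u in Ioi (0:ℝ), ∫ v in Ioi (0:ℝ), ∫ w in Ioi (0:ℝ),
              Phi x u v w * ρ₁ u * ρ₂ v * ρ₃ w
            = ∫ u, (∫ s, f (u, s) ∂(μ.prod μ)) ∂μ := integral_congr_ae h2
          _ = ∫ t, f t ∂PP := integral_integral (by exact hI)
      rw [P, ← hstep]
      field_simp
    have hPnn : 0 ≤ P ρ₁ ρ₂ ρ₃ x := by
      have h0 : 0 ≤ ∫ t, f t ∂PP := integral_nonneg_of_ae hfnn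
      nlinarith [Real.pi_pos]
    refine ⟨?_, hPnn⟩
    rw [hiter, ofReal_integral_eq_lintegral_ofReal hI hfnn]
    have heq : (fun t => ENNReal.ofReal (f t)) =ᵐ[PP] fun t => Φe x t * W' t := by
      filter_upwards [haemem, hWm.ae_eq_mk] with t ht hW
      have h1 : 0 ≤ Phi x t.1 t.2.1 t.2.2 := phi_nonneg (add_pos ht.2.1 ht.2.2) x t.1
      have h2 : f t = Phi x t.1 t.2.1 t.2.2 * (ρ₁ t.1 * ρ₂ t.2.1 * ρ₃ t.2.2) := by
        rw [hfdef]; ring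
      rw [h2, ENNReal.ofReal_mul h1, show W' t = W t from hW.symm]
    exact lintegral_congr_ae heq.symm
  -- J x and its properties
  set J : ℝ → ENNReal := fun x => ∫⁻ t, Φe x t * A' t ∂PP with hJdef
  have hjoint : Measurable (fun z : ℝ × (ℝ × ℝ × ℝ) => Φe z.1 z.2 * A' z.2) :=
    (ENNReal.measurable_ofReal.comp measurable_phi).mul (hA'm.comp measurable_snd)
  have hJm : Measurable J := by
    exact Measurable.lintegral_prod_right hjoint
  have hJint : ∫⁻ x, J x ∂μ = ENNReal.ofReal π *
      (ENNReal.ofReal R₁ * (ENNReal.ofReal R₂ * ENNReal.ofReal R₃)) := by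
    have hswap : ∫⁻ x, J x ∂μ = ∫⁻ t, ∫⁻ x, Φe x t * A' t ∂μ ∂PP :=
      lintegral_lintegral_swap hjoint.aemeasurable
    rw [hswap]
    have hstep : ∫⁻ t, ∫⁻ x, Φe x t * A' t ∂μ ∂PP
        = ∫⁻ t, A' t * ENNReal.ofReal π ∂PP := by
      apply lintegral_congr_ae
      filter_upwards [haemem] with t ht
      have hm : Measurable (fun x => Φe x t) :=
        ENNReal.measurable_ofReal.comp (measurable_phi.comp (measurable_id.prodMk measurable_const))
      calc ∫⁻ x, Φe x t * A' t ∂μ = ∫⁻ x, A' t * Φe x t ∂μ := by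
            simp only [mul_comm]
        _ = A' t * ∫⁻ x, Φe x t ∂μ := lintegral_const_mul _ hm
        _ = A' t * ENNReal.ofReal π := by
            congr 1
            obtain ⟨h1, h2⟩ := poisson_core ht.1 ht.2.1 ht.2.2
            have hnn : 0 ≤ᵐ[μ] fun x => Phi x t.1 t.2.1 t.2.2 := by
              filter_upwards [ae_restrict_mem measurableSet_Ioi] with y _
              exact phi_nonneg (add_pos ht.2.1 ht.2.2) y t.1
            rw [hμdef] at *
            rw [← ofReal_integral_eq_lintegral_ofReal h1 hnn, h2]
    rw [hstep, lintegral_mul_const' _ _ ENNReal.ofReal_ne_top, mul_comm]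
    congr 1
    have hsplit : ∫⁻ t, A' t ∂PP
        = ∫⁻ t : ℝ × ℝ × ℝ, k₁' t.1 * ((fun s : ℝ × ℝ => k₂' s.1 * k₃' s.2) t.2) ∂PP := by
      apply lintegral_congr
      intro t
      simp only [hA'def, mul_assoc]
    rw [hsplit, lintegral_prod_mul (f := k₁') (g := fun s : ℝ × ℝ => k₂' s.1 * k₃' s.2)
        hk₁m.measurable_mk.aemeasurable
        (by exact ((hk₂m.measurable_mk.comp measurable_fst).mul
          (hk₃m.measurable_mk.comp measurable_snd)).aemeasurable),
      lintegral_prod_mul (f := k₂') (g := k₃')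
        hk₂m.measurable_mk.aemeasurable hk₃m.measurable_mk.aemeasurable,
      hlk₁, hlk₂, hlk₃]
  have hJfin : ∀ᵐ x ∂μ, J x < ⊤ := by
    apply ae_lt_top hJm
    rw [hJint]
    finiteness
  -- the pointwise bound
  have hpoint : ∀ x ∈ Ioi (0:ℝ), J x < ⊤ →
      ENNReal.ofReal (|P (fun u => F₁ u * ρ₁ u) (fun v => F₂ v * ρ₂ v)
          (fun w => F₃ w * ρ₃ w) x * P ρ₁ ρ₂ ρ₃ x ^ (1 / p - 1)| ^ p)
        ≤ ENNReal.ofReal (1 / π) * J x := by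
    intro x hx hfin
    obtain ⟨hC, hc0⟩ := hCval x hx
    set c : ℝ := P ρ₁ ρ₂ ρ₃ x with hcdef
    set m : ℝ × ℝ × ℝ → ENNReal :=
      fun t => Φe x t * (A' t ^ (1/p) * W' t ^ (1/q)) with hmdef
    have hmm : Measurable m := by
      apply Measurable.mul (hΦem x)
      apply Measurable.mul
      · fun_prop
      · fun_prop
    set e : ℝ × ℝ × ℝ → ENNReal := fun t => ENNReal.ofReal
      ‖Phi x t.1 t.2.1 t.2.2 * (F₁ t.1 * ρ₁ t.1) * (F₂ t.2.1 * ρ₂ t.2.1) *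
        (F₃ t.2.2 * ρ₃ t.2.2)‖ with hedef
    -- Step A : bound the Bochner integral by the iterated lintegral
    have hA1 : ENNReal.ofReal |P (fun u => F₁ u * ρ₁ u) (fun v => F₂ v * ρ₂ v)
          (fun w => F₃ w * ρ₃ w) x|
        ≤ ENNReal.ofReal (1/π) * ∫⁻ u, ∫⁻ v, ∫⁻ w, e (u, v, w) ∂μ ∂μ ∂μ := by
      rw [P, abs_mul, abs_of_nonneg (by positivity : (0:ℝ) ≤ 1/π),
        ENNReal.ofReal_mul (by positivity : (0:ℝ) ≤ 1/π)]
      apply mul_le_mul_right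
      calc ENNReal.ofReal |∫ u in Ioi (0:ℝ), ∫ v in Ioi (0:ℝ), ∫ w in Ioi (0:ℝ),
            Phi x u v w * (F₁ u * ρ₁ u) * (F₂ v * ρ₂ v) * (F₃ w * ρ₃ w)|
          ≤ ∫⁻ u, ENNReal.ofReal ‖∫ v in Ioi (0:ℝ), ∫ w in Ioi (0:ℝ),
              Phi x u v w * (F₁ u * ρ₁ u) * (F₂ v * ρ₂ v) * (F₃ w * ρ₃ w)‖ ∂μ := by
            rw [← Real.norm_eq_abs]
            exact ofReal_norm_integral_le μ
        _ ≤ ∫⁻ u, ∫⁻ v, ∫⁻ w, e (u, v, w) ∂μ ∂μ ∂μ := by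
            apply lintegral_mono
            intro u
            calc ENNReal.ofReal ‖∫ v in Ioi (0:ℝ), ∫ w in Ioi (0:ℝ),
                Phi x u v w * (F₁ u * ρ₁ u) * (F₂ v * ρ₂ v) * (F₃ w * ρ₃ w)‖
                ≤ ∫⁻ v, ENNReal.ofReal ‖∫ w in Ioi (0:ℝ),
                    Phi x u v w * (F₁ u * ρ₁ u) * (F₂ v * ρ₂ v) * (F₃ w * ρ₃ w)‖ ∂μ :=
                  ofReal_norm_integral_le μ
              _ ≤ ∫⁻ v, ∫⁻ w, e (u, v, w) ∂μ ∂μ := by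
                  apply lintegral_mono
                  intro v
                  exact ofReal_norm_integral_le μ
    -- Step B : the iterated lintegral equals the product lintegral of m
    have hee : e =ᵐ[PP] m := by
      filter_upwards [haemem, hA'ae, hWm.ae_eq_mk] with t ht hA hW
      have hu : (0:ℝ) < t.1 := ht.1
      have hv : (0:ℝ) < t.2.1 := ht.2.1
      have hw : (0:ℝ) < t.2.2 := ht.2.2
      have hr1 := hρ₁ t.1 hu
      have hr2 := hρ₂ t.2.1 hv
      have hr3 := hρ₃ t.2.2 hw
      have hphinn : 0 ≤ Phi x t.1 t.2.1 t.2.2 := phi_nonneg (add_pos hv hw) x t.1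
      have hfac : ∀ (F r : ℝ), 0 < r → |F| * r = (|F|^p * r)^(1/p) * r^(1/q) := by
        intro F r hr
        rw [Real.mul_rpow (Real.rpow_nonneg (abs_nonneg _) _) hr.le,
          ← Real.rpow_mul (abs_nonneg _), mul_one_div_cancel hpne, Real.rpow_one,
          mul_assoc, ← Real.rpow_add hr, hq1, Real.rpow_one]
      have hnorm : ‖Phi x t.1 t.2.1 t.2.2 * (F₁ t.1 * ρ₁ t.1) * (F₂ t.2.1 * ρ₂ t.2.1) *
            (F₃ t.2.2 * ρ₃ t.2.2)‖
          = Phi x t.1 t.2.1 t.2.2 * (|F₁ t.1| * ρ₁ t.1) * (|F₂ t.2.1| * ρ₂ t.2.1) *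
            (|F₃ t.2.2| * ρ₃ t.2.2) := by
        rw [Real.norm_eq_abs, abs_mul, abs_mul, abs_mul, abs_mul, abs_mul, abs_mul,
          abs_of_nonneg hphinn, abs_of_nonneg hr1.le, abs_of_nonneg hr2.le,
          abs_of_nonneg hr3.le]
      have hA1nn : (0:ℝ) ≤ |F₁ t.1|^p * ρ₁ t.1 := by positivity
      have hA2nn : (0:ℝ) ≤ |F₂ t.2.1|^p * ρ₂ t.2.1 := by positivity
      have hA3nn : (0:ℝ) ≤ |F₃ t.2.2|^p * ρ₃ t.2.2 := by positivity
      have hrealeq : Phi x t.1 t.2.1 t.2.2 * (|F₁ t.1| * ρ₁ t.1) * (|F₂ t.2.1| * ρ₂ t.2.1) *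
            (|F₃ t.2.2| * ρ₃ t.2.2)
          = Phi x t.1 t.2.1 t.2.2 *
            (((|F₁ t.1|^p * ρ₁ t.1) * (|F₂ t.2.1|^p * ρ₂ t.2.1) * (|F₃ t.2.2|^p * ρ₃ t.2.2))^(1/p) *
              ((ρ₁ t.1 * ρ₂ t.2.1 * ρ₃ t.2.2))^(1/q)) := by
        rw [hfac _ _ hr1, hfac _ _ hr2, hfac _ _ hr3,
          Real.mul_rpow (mul_nonneg hA1nn hA2nn) hA3nn, Real.mul_rpow hA1nn hA2nn,
          Real.mul_rpow (mul_nonneg hr1.le hr2.le) hr3.le, Real.mul_rpow hr1.le hr2.le]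
        ring
      have hA2 : A' t = k₁ t.1 * k₂ t.2.1 * k₃ t.2.2 := hA.symm
      have hW2 : W' t = W t := hW.symm
      show e t = m t
      simp only [hedef, hmdef]
      rw [hnorm, hrealeq, hA2, hW2]
      simp only [hk₁def, hk₂def, hk₃def, hΦedef, hWdef]
      rw [ENNReal.ofReal_mul hphinn, ENNReal.ofReal_mul (by positivity),
        ← ENNReal.ofReal_rpow_of_nonneg (by positivity) hip,
        ← ENNReal.ofReal_rpow_of_nonneg (by positivity) hiq,
        ENNReal.ofReal_mul (mul_nonneg hA1nn hA2nn), ENNReal.ofReal_mul hA1nn]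
    have hA2 : ∫⁻ u, ∫⁻ v, ∫⁻ w, e (u, v, w) ∂μ ∂μ ∂μ = ∫⁻ t, m t ∂PP :=
      lintegral3_eq hmm.aemeasurable hee
    -- Step C : Hölder's inequality
    have hHolder : ∫⁻ t, m t ∂PP ≤ (J x) ^ (1/p) *
        (ENNReal.ofReal (π * c)) ^ (1/q) := by
      have hf : Measurable fun t => (Φe x t * A' t) ^ (1/p) := by
        have := (hΦem x).mul hA'm; fun_prop
      have hg : Measurable fun t => (Φe x t * W' t) ^ (1/q) := by
        have := (hΦem x).mul hW'm; fun_prop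
      have hmain := ENNReal.lintegral_mul_le_Lp_mul_Lq PP hpq hf.aemeasurable hg.aemeasurable
      have hfg : ∀ t, ((fun t => (Φe x t * A' t) ^ (1/p)) * fun t => (Φe x t * W' t) ^ (1/q)) t
          = m t := by
        intro t
        simp only [Pi.mul_apply, hmdef]
        rw [ENNReal.mul_rpow_of_nonneg _ _ hip, ENNReal.mul_rpow_of_nonneg _ _ hiq,
          mul_mul_mul_comm, ← ENNReal.rpow_add_of_nonneg _ _ hip hiq, hq1, ENNReal.rpow_one]
      have hfp : ∀ t : ℝ × ℝ × ℝ, ((Φe x t * A' t) ^ (1/p)) ^ p = Φe x t * A' t := by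
        intro t
        rw [← ENNReal.rpow_mul, one_div, inv_mul_cancel₀ hpne, ENNReal.rpow_one]
      have hgq : ∀ t : ℝ × ℝ × ℝ, ((Φe x t * W' t) ^ (1/q)) ^ q = Φe x t * W' t := by
        intro t
        rw [← ENNReal.rpow_mul, one_div, inv_mul_cancel₀ hpq.symm.ne_zero, ENNReal.rpow_one]
      rw [lintegral_congr hfg] at hmain
      calc ∫⁻ t, m t ∂PP
          ≤ (∫⁻ t, ((Φe x t * A' t) ^ (1/p)) ^ p ∂PP) ^ (1/p) *
            (∫⁻ t, ((Φe x t * W' t) ^ (1/q)) ^ q ∂PP) ^ (1/q) := hmain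
        _ = (J x) ^ (1/p) * (ENNReal.ofReal (π * c)) ^ (1/q) := by
            rw [lintegral_congr hfp, lintegral_congr hgq, hC, hJdef]
    -- Step D : transfer to the reals and conclude
    have htot : ENNReal.ofReal |P (fun u => F₁ u * ρ₁ u) (fun v => F₂ v * ρ₂ v)
          (fun w => F₃ w * ρ₃ w) x|
        ≤ ENNReal.ofReal (1/π) * ((J x) ^ (1/p) * (ENNReal.ofReal (π * c)) ^ (1/q)) := by
      calc ENNReal.ofReal |P (fun u => F₁ u * ρ₁ u) (fun v => F₂ v * ρ₂ v)
            (fun w => F₃ w * ρ₃ w) x|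
          ≤ ENNReal.ofReal (1/π) * ∫⁻ u, ∫⁻ v, ∫⁻ w, e (u, v, w) ∂μ ∂μ ∂μ := hA1
        _ = ENNReal.ofReal (1/π) * ∫⁻ t, m t ∂PP := by rw [hA2]
        _ ≤ _ := mul_le_mul_right hHolder _
    have hRHSne : ENNReal.ofReal (1/π) * ((J x) ^ (1/p) * (ENNReal.ofReal (π * c)) ^ (1/q)) ≠ ⊤ := by
      apply ENNReal.mul_ne_top ENNReal.ofReal_ne_top
      exact ENNReal.mul_ne_top (ENNReal.rpow_ne_top_of_nonneg hip hfin.ne)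
        (ENNReal.rpow_ne_top_of_nonneg hiq ENNReal.ofReal_ne_top)
    set j : ℝ := (J x).toReal with hjdef
    have hj0 : 0 ≤ j := ENNReal.toReal_nonneg
    have habs : |P (fun u => F₁ u * ρ₁ u) (fun v => F₂ v * ρ₂ v)
          (fun w => F₃ w * ρ₃ w) x| ≤ (1/π) * (j ^ (1/p) * (π * c) ^ (1/q)) := by
      have := (ENNReal.ofReal_le_iff_le_toReal hRHSne).mp htot
      rw [ENNReal.toReal_mul, ENNReal.toReal_mul, ENNReal.toReal_ofReal (by positivity),
        ← ENNReal.toReal_rpow, ← ENNReal.toReal_rpow,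
        ENNReal.toReal_ofReal (by positivity : (0:ℝ) ≤ π * c)] at this
      exact this
    have hrealle : |P (fun u => F₁ u * ρ₁ u) (fun v => F₂ v * ρ₂ v)
          (fun w => F₃ w * ρ₃ w) x * c ^ (1/p - 1)| ^ p ≤ (1/π) * j := by
      by_cases hczero : c = 0
      · have h1 : (1:ℝ)/p - 1 ≠ 0 := by
          have : 1/p < 1 := by rw [div_lt_one hppos]; exact hp
          linarith
        rw [hczero, Real.zero_rpow h1, mul_zero, abs_zero, Real.zero_rpow hpne]
        positivity
      · have hcpos : 0 < c := lt_of_le_of_ne hc0 (Ne.symm hczero)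
        have hBnn : (0:ℝ) ≤ (1/π) * (j ^ (1/p) * (π * c) ^ (1/q)) := by positivity
        calc |P (fun u => F₁ u * ρ₁ u) (fun v => F₂ v * ρ₂ v)
              (fun w => F₃ w * ρ₃ w) x * c ^ (1/p - 1)| ^ p
            = |P (fun u => F₁ u * ρ₁ u) (fun v => F₂ v * ρ₂ v)
                (fun w => F₃ w * ρ₃ w) x| ^ p * (c ^ (1/p - 1)) ^ p := by
              rw [abs_mul, abs_of_nonneg (Real.rpow_nonneg hc0 _),
                Real.mul_rpow (abs_nonneg _) (Real.rpow_nonneg hc0 _)]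
          _ ≤ ((1/π) * (j ^ (1/p) * (π * c) ^ (1/q))) ^ p * (c ^ (1/p - 1)) ^ p := by
              apply mul_le_mul_of_nonneg_right _ (Real.rpow_nonneg (Real.rpow_nonneg hc0 _) _)
              exact Real.rpow_le_rpow (abs_nonneg _) habs hppos.le
          _ = (1/π) * j := alg_aux Real.pi_pos hj0 hcpos hpne hq1
    calc ENNReal.ofReal (|P (fun u => F₁ u * ρ₁ u) (fun v => F₂ v * ρ₂ v)
          (fun w => F₃ w * ρ₃ w) x * c ^ (1/p - 1)| ^ p)
        ≤ ENNReal.ofReal ((1/π) * j) := ENNReal.ofReal_le_ofReal hrealle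
      _ = ENNReal.ofReal (1/π) * ENNReal.ofReal j := ENNReal.ofReal_mul (by positivity)
      _ ≤ ENNReal.ofReal (1/π) * J x :=
          mul_le_mul_right ENNReal.ofReal_toReal_le _
  -- putting it together
  set G : ℝ → ℝ := fun x =>
    |P (fun u => F₁ u * ρ₁ u) (fun v => F₂ v * ρ₂ v) (fun w => F₃ w * ρ₃ w) x *
      P ρ₁ ρ₂ ρ₃ x ^ (1 / p - 1)| ^ p with hGdef
  have hG0 : ∀ x, 0 ≤ G x := fun x => Real.rpow_nonneg (abs_nonneg _) _
  have hSbound : ∫ x in Ioi (0:ℝ), G x ≤ R₁ * R₂ * R₃ := by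
    have h1 : ∫ x in Ioi (0:ℝ), G x ≤ (∫⁻ x, ENNReal.ofReal (G x) ∂μ).toReal := by
      by_cases hint : Integrable G μ
      · rw [hμdef] at hint ⊢
        rw [integral_eq_lintegral_of_nonneg_ae (Eventually.of_forall hG0) hint.1]
      · rw [hμdef] at hint ⊢
        rw [integral_undef hint]
        exact ENNReal.toReal_nonneg
    have h2 : ∫⁻ x, ENNReal.ofReal (G x) ∂μ ≤ ENNReal.ofReal (1/π) * ∫⁻ x, J x ∂μ := by
      rw [← lintegral_const_mul' _ _ ENNReal.ofReal_ne_top]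
      apply lintegral_mono_ae
      filter_upwards [ae_restrict_mem measurableSet_Ioi, hJfin] with x hx hfin
      exact hpoint x hx hfin
    have h3 : (ENNReal.ofReal (1/π) * ∫⁻ x, J x ∂μ).toReal = R₁ * R₂ * R₃ := by
      rw [hJint, ENNReal.toReal_mul, ENNReal.toReal_mul, ENNReal.toReal_mul,
        ENNReal.toReal_mul, ENNReal.toReal_ofReal (by positivity),
        ENNReal.toReal_ofReal Real.pi_pos.le, ENNReal.toReal_ofReal hR₁0,
        ENNReal.toReal_ofReal hR₂0, ENNReal.toReal_ofReal hR₃0]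
      rw [one_div, inv_mul_cancel_left₀ Real.pi_pos.ne']
      ring
    calc ∫ x in Ioi (0:ℝ), G x ≤ (∫⁻ x, ENNReal.ofReal (G x) ∂μ).toReal := h1
      _ ≤ (ENNReal.ofReal (1/π) * ∫⁻ x, J x ∂μ).toReal := by
          apply ENNReal.toReal_mono _ h2
          rw [hJint]
          finiteness
      _ = R₁ * R₂ * R₃ := h3
  have hSnn : 0 ≤ ∫ x in Ioi (0:ℝ), G x := integral_nonneg hG0
  calc (∫ x in Ioi (0:ℝ), G x) ^ (1/p) ≤ (R₁ * R₂ * R₃) ^ (1/p) :=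
        Real.rpow_le_rpow hSnn hSbound hip
    _ = R₁ ^ (1/p) * R₂ ^ (1/p) * R₃ ^ (1/p) := by
        rw [Real.mul_rpow (mul_nonneg hR₁0 hR₂0) hR₃0, Real.mul_rpow hR₁0 hR₂0]
end
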